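/- Let σ be a density matrix on ℂ^m ⊗ ℂ^n such that the partial trace tr_A σ is a pure state, i.e. tr_A σ = ψψ* for some unit vector ψ ∈ ℂ^n. Then σ = (tr_B σ) ⊗ (tr_A σ). (A bipartite state with a pure marginal is the product of its marginals.) -/

import Mathlib

open Matrix Kronecker BigOperators ComplexOrder

noncomputable section

/-- Partial trace over the second factor. -/
def trB {m n : ℕ} (ρ : Matrix (Fin m × Fin n) (Fin m × Fin n) ℂ) :
    Matrix (Fin m) (Fin m) ℂ :=
  fun i j => ∑ k : Fin n, ρ (i, k) (j, k)

/-- Partial trace over the first factor. -/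
def trA {m n : ℕ} (ρ : Matrix (Fin m × Fin n) (Fin m × Fin n) ℂ) :
    Matrix (Fin n) (Fin n) ℂ :=
  fun k l => ∑ i : Fin m, ρ (i, k) (i, l)

/-- A density matrix: positive semidefinite with trace 1. -/
def IsDensityMatrix {d : Type*} [Fintype d] [DecidableEq d] (ρ : Matrix d d ℂ) : Prop :=
  ρ.PosSemidef ∧ ρ.trace = 1

/-- An orthonormal basis of ℂ^m, given as a family of m vectors. -/
def IsONB {m : ℕ} (e : Fin m → Fin m → ℂ) : Prop :=
  ∀ i j, star (e i) ⬝ᵥ e j = if i = j then 1 else 0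

/-- The rank-one matrix v v*, with entries v j * conj (v k). -/
def proj {m : ℕ} (v : Fin m → ℂ) : Matrix (Fin m) (Fin m) ℂ :=
  vecMulVec v (star v)

/-- A classical-quantum (zero-discord) state: ρ = ∑ i (eᵢ eᵢ*) ⊗ σᵢ for an
orthonormal basis e of ℂ^m and positive semidefinite σᵢ. -/
def ClassicalQuantum {m n : ℕ} (ρ : Matrix (Fin m × Fin n) (Fin m × Fin n) ℂ) : Prop :=
  ∃ e : Fin m → Fin m → ℂ, IsONB e ∧
    ∃ σ : Fin m → Matrix (Fin n) (Fin n) ℂ,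
      (∀ i, (σ i).PosSemidef) ∧ ρ = ∑ i, proj (e i) ⊗ₖ σ i

/-- A pure state: ρ = ψψ* for a unit vector ψ. -/
def IsPure {d : ℕ} (ρ : Matrix (Fin d) (Fin d) ℂ) : Prop :=
  ∃ ψ : Fin d → ℂ, star ψ ⬝ᵥ ψ = 1 ∧ ρ = vecMulVec ψ (star ψ)

theorem stmt5 {m n : ℕ} (σ : Matrix (Fin m × Fin n) (Fin m × Fin n) ℂ)
    (hσ : IsDensityMatrix σ)
    (hpure : ∃ ψ : Fin n → ℂ, star ψ ⬝ᵥ ψ = 1 ∧ trA σ = vecMulVec ψ (star ψ)) :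
    σ = trB σ ⊗ₖ trA σ := by
  obtain ⟨hps, -⟩ := hσ
  obtain ⟨ψ, hψ, hA⟩ := hpure
  have hψ' : ∑ k, (starRingEnd ℂ) (ψ k) * ψ k = 1 := by
    simpa [dotProduct, Pi.star_apply, RCLike.star_def] using hψ
  have hAent : ∀ k l, trA σ k l = ψ k * (starRingEnd ℂ) (ψ l) := by
    intro k l
    rw [hA]
    simp [vecMulVec_apply, Pi.star_apply, RCLike.star_def]
  have hH : ∀ a b, σ a b = (starRingEnd ℂ) (σ b a) := by
    intro a b
    conv_lhs => rw [← hps.1]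
    simp [conjTranspose_apply, RCLike.star_def]
  -- key: σ kills vectors supported in slot i with second component φ ⊥ ψ
  have key : ∀ (i : Fin m) (φ : Fin n → ℂ), star ψ ⬝ᵥ φ = 0 →
      ∀ a, ∑ l, σ a (i, l) * φ l = 0 := by
    intro i φ hφ a
    have hφ' : ∑ l, (starRingEnd ℂ) (ψ l) * φ l = 0 := by
      simpa [dotProduct, Pi.star_apply, RCLike.star_def] using hφ
    set x : Fin m → (Fin m × Fin n) → ℂ :=
      fun i p => if p.1 = i then φ p.2 else 0 with hx
    have hv : ∀ i' (p : Fin m × Fin n), (σ *ᵥ x i') p = ∑ l, σ p (i', l) * φ l := by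
      intro i' p
      simp only [mulVec, dotProduct, hx, mul_ite, mul_zero, Fintype.sum_prod_type]
      simp [Finset.sum_ite_eq']
    have hq : ∀ i', star (x i') ⬝ᵥ σ *ᵥ (x i')
        = ∑ k, ∑ l, (starRingEnd ℂ) (φ k) * (σ (i', k) (i', l) * φ l) := by
      intro i'
      simp only [dotProduct, hv]
      simp only [dotProduct, hv, Pi.star_apply, hx, Fintype.sum_prod_type, RCLike.star_def,
        Finset.mul_sum]
      have hred : ∀ x : Fin m,
          (∑ x1, ∑ i2, (starRingEnd ℂ) (if x = i' then φ x1 else 0) *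
            (σ (x, x1) (i', i2) * φ i2))
          = if x = i' then
              ∑ k, ∑ l, (starRingEnd ℂ) (φ k) * (σ (i', k) (i', l) * φ l) else 0 := by
        intro x
        by_cases hxi : x = i' <;> simp [hxi]
      calc (∑ x, ∑ x1, ∑ i2, (starRingEnd ℂ) (if x = i' then φ x1 else 0) *
            (σ (x, x1) (i', i2) * φ i2))
          = ∑ x, if x = i' then
              ∑ k, ∑ l, (starRingEnd ℂ) (φ k) * (σ (i', k) (i', l) * φ l) else 0 :=
            Finset.sum_congr rfl fun x _ => hred x
        _ = ∑ k, ∑ l, (starRingEnd ℂ) (φ k) * (σ (i', k) (i', l) * φ l) := by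
            rw [Finset.sum_ite_eq']; simp
    have hsum : ∑ i', star (x i') ⬝ᵥ σ *ᵥ (x i') = 0 := by
      simp only [hq]
      calc ∑ i', ∑ k, ∑ l, (starRingEnd ℂ) (φ k) * (σ (i', k) (i', l) * φ l)
          = ∑ k, ∑ l, (starRingEnd ℂ) (φ k) * (trA σ k l * φ l) := by
            rw [Finset.sum_comm]
            refine Finset.sum_congr rfl fun k _ => ?_
            rw [Finset.sum_comm]
            refine Finset.sum_congr rfl fun l _ => ?_
            simp only [trA, Finset.sum_mul, Finset.mul_sum]
        _ = (∑ k, (starRingEnd ℂ) (φ k) * ψ k) * (∑ l, (starRingEnd ℂ) (ψ l) * φ l) := by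
            rw [Finset.sum_mul]
            refine Finset.sum_congr rfl fun k _ => ?_
            rw [Finset.mul_sum]
            refine Finset.sum_congr rfl fun l _ => ?_
            rw [hAent]; ring
        _ = 0 := by rw [hφ', mul_zero]
    have hzero : star (x i) ⬝ᵥ σ *ᵥ (x i) = 0 :=
      (Finset.sum_eq_zero_iff_of_nonneg (fun i' _ => hps.dotProduct_mulVec_nonneg (x i'))).mp hsum i
        (Finset.mem_univ _)
    have hmv := (hps.dotProduct_mulVec_zero_iff (x i)).mp hzero
    have := congrFun hmv a
    rw [hv] at this
    exact this
  -- relation R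
  set c : (Fin m × Fin n) → Fin m → ℂ := fun a i => ∑ l', σ a (i, l') * ψ l' with hc
  have R : ∀ a i l, σ a (i, l) = (starRingEnd ℂ) (ψ l) * c a i := by
    intro a i l
    set φ0 : Fin n → ℂ :=
      fun l' => (if l' = l then 1 else 0) - (starRingEnd ℂ) (ψ l) * ψ l' with hφ0
    have hφ : star ψ ⬝ᵥ φ0 = 0 := by
      simp only [dotProduct, Pi.star_apply, RCLike.star_def, hφ0, mul_sub,
        Finset.sum_sub_distrib, mul_ite, mul_one, mul_zero, Finset.sum_ite_eq',
        Finset.mem_univ, if_true]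
      have h2 : ∑ l', (starRingEnd ℂ) (ψ l') * ((starRingEnd ℂ) (ψ l) * ψ l')
          = (starRingEnd ℂ) (ψ l) * ∑ l', (starRingEnd ℂ) (ψ l') * ψ l' := by
        rw [Finset.mul_sum]
        exact Finset.sum_congr rfl fun l' _ => by ring
      rw [h2, hψ', mul_one, sub_self]
    have hk := key i φ0 hφ a
    have hexp : ∑ l', σ a (i, l') * φ0 l'
        = σ a (i, l) - (starRingEnd ℂ) (ψ l) * c a i := by
      simp only [hφ0, mul_sub, Finset.sum_sub_distrib, mul_ite, mul_one, mul_zero,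
        Finset.sum_ite_eq', Finset.mem_univ, if_true, hc]
      congr 1
      rw [Finset.mul_sum]
      exact Finset.sum_congr rfl fun l' _ => by ring
    rw [hexp] at hk
    exact (sub_eq_zero.mp hk)
  ext ⟨j, k⟩ ⟨i, l⟩
  rw [kroneckerMap_apply]
  set s : ℂ := ∑ l', (starRingEnd ℂ) (c (i, l') j) * ψ l' with hs
  have hcjk : ∀ k', c (j, k') i = ψ k' * s := by
    intro k'
    calc c (j, k') i = ∑ l', σ (j, k') (i, l') * ψ l' := by rw [hc]
      _ = ∑ l', ψ k' * ((starRingEnd ℂ) (c (i, l') j) * ψ l') := by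
          refine Finset.sum_congr rfl fun l' _ => ?_
          rw [hH (j, k') (i, l'), R (i, l') j k']
          simp only [_root_.map_mul, Complex.conj_conj]
          ring
      _ = ψ k' * s := by rw [hs, Finset.mul_sum]
  have hσent : σ (j, k) (i, l) = (starRingEnd ℂ) (ψ l) * (ψ k * s) := by
    rw [R (j, k) i l, hcjk]
  have htrB : trB σ j i = s := by
    show (∑ k', σ (j, k') (i, k')) = s
    calc ∑ k', σ (j, k') (i, k')
        = ∑ k', (starRingEnd ℂ) (ψ k') * (ψ k' * s) := by
          refine Finset.sum_congr rfl fun k' _ => ?_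
          rw [R (j, k') i k', hcjk]
      _ = (∑ k', (starRingEnd ℂ) (ψ k') * ψ k') * s := by
          rw [Finset.sum_mul]
          exact Finset.sum_congr rfl fun k' _ => by ring
      _ = s := by rw [hψ', one_mul]
  rw [hσent, htrB, hAent]
  ring
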